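/- Fix d : ℕ and a partition of a finite Train ⊆ (Fin d → Bool) into disjoint Good and Bad. Let ℓ ⊆ (Fin d → Bool) be a nonempty finite set and let x ∈ Fin d be an index such that all elements of ℓ have the same value at coordinate x. Then for every k ≥ 1, WE^k(ℓ, x) = min over i ∈ Fin d of WE^{k−1}(ℓ, i). Consequently IG^1(ℓ, x) = 0, and for k ≥ 2, if the maximum over all i ∈ Fin d of the (k−1)-look-ahead information gain IG^{k−1}(ℓ, i) equals 0, then IG^k(ℓ, x) = 0. -/

import Mathlib

/-- The entropy `H(ℓ)` of a finite set `ℓ` with respect to the positive class `Good`: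
with `p(ℓ) = |ℓ ∩ Good| / |ℓ|`, `H(ℓ) = −p·log p − (1−p)·log(1−p)` (natural logarithm;
`Real.log 0 = 0` gives the convention `0·log 0 = 0`, and `H(∅) = 0`). -/
noncomputable def entH {d : ℕ} (Good ℓ : Finset (Fin d → Bool)) : ℝ :=
  -((((ℓ ∩ Good).card : ℝ) / ℓ.card) * Real.log (((ℓ ∩ Good).card : ℝ) / ℓ.card))
  - ((1 - ((ℓ ∩ Good).card : ℝ) / ℓ.card) * Real.log (1 - ((ℓ ∩ Good).card : ℝ) / ℓ.card))

/-- The `k`-step weighted entropy: `WE^0(ℓ, i) = |ℓ|·H(ℓ)` and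
`WE^{k+1}(ℓ, i) = min over i₀ i₁ of WE^k(ℓ[i=0], i₀) + WE^k(ℓ[i=1], i₁)`. -/
noncomputable def WE {d : ℕ} (Good : Finset (Fin d → Bool)) :
    ℕ → Finset (Fin d → Bool) → Fin d → ℝ
  | 0, ℓ, _ => (ℓ.card : ℝ) * entH Good ℓ
  | k + 1, ℓ, i => ⨅ i₀ : Fin d, ⨅ i₁ : Fin d,
      (WE Good k (ℓ.filter fun v => v i = false) i₀ +
       WE Good k (ℓ.filter fun v => v i = true) i₁)

/-- The `k`-look-ahead information gain `IG^k(ℓ, i) = H(ℓ) − WE^k(ℓ, i)/|ℓ|`. -/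
noncomputable def IGk {d : ℕ} (Good : Finset (Fin d → Bool)) (k : ℕ)
    (ℓ : Finset (Fin d → Bool)) (i : Fin d) : ℝ :=
  entH Good ℓ - WE Good k ℓ i / ℓ.card

/-- The standard (ID3) information gain
`IG(ℓ, i) = H(ℓ) − (|ℓ[i=0]|/|ℓ|)·H(ℓ[i=0]) − (|ℓ[i=1]|/|ℓ|)·H(ℓ[i=1])`. -/
noncomputable def IG {d : ℕ} (Good : Finset (Fin d → Bool))
    (ℓ : Finset (Fin d → Bool)) (i : Fin d) : ℝ :=
  entH Good ℓ
  - ((ℓ.filter fun v => v i = false).card : ℝ) / ℓ.card * entH Good (ℓ.filter fun v => v i = false)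
  - ((ℓ.filter fun v => v i = true).card : ℝ) / ℓ.card * entH Good (ℓ.filter fun v => v i = true)

/-- If all elements of a nonempty `ℓ` share the same value at coordinate `x`, then for every
`k ≥ 1`, `WE^k(ℓ, x) = min over i of WE^{k−1}(ℓ, i)`; consequently `IG^1(ℓ, x) = 0`, and for
`k ≥ 2`, if the maximal `(k−1)`-look-ahead information gain is `0` then `IG^k(ℓ, x) = 0`. -/
lemma WE_empty {d : ℕ} (Good : Finset (Fin d → Bool)) (k : ℕ) (i : Fin d) :
    WE Good k ∅ i = 0 := by
  haveI : Nonempty (Fin d) := ⟨i⟩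
  induction k generalizing i with
  | zero => simp [WE]
  | succ k ih => simp [WE, Finset.filter_empty, ih, ciInf_const]

theorem constant_coordinate_lookahead
    (d : ℕ) (Train Good Bad : Finset (Fin d → Bool))
    (hpart : Good ∪ Bad = Train) (hdisj : Disjoint Good Bad)
    (ℓ : Finset (Fin d → Bool)) (hne : ℓ.Nonempty) (x : Fin d)
    (hconst : ∀ v ∈ ℓ, ∀ w ∈ ℓ, v x = w x) :
    (∀ k : ℕ, WE Good (k + 1) ℓ x = ⨅ i : Fin d, WE Good k ℓ i) ∧
    IGk Good 1 ℓ x = 0 ∧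
    (∀ k : ℕ, 2 ≤ k → (⨆ i : Fin d, IGk Good (k - 1) ℓ i) = 0 → IGk Good k ℓ x = 0) := by
  haveI : Nonempty (Fin d) := ⟨x⟩
  obtain ⟨v₀, hv₀⟩ := hne
  have hcpos : (0 : ℝ) < ℓ.card := by
    exact_mod_cast Finset.card_pos.mpr ⟨v₀, hv₀⟩
  have hmain : ∀ k : ℕ, WE Good (k + 1) ℓ x = ⨅ i : Fin d, WE Good k ℓ i := by
    intro k
    cases hbv : v₀ x with
    | false =>
      have h1 : ℓ.filter (fun v => v x = false) = ℓ :=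
        Finset.filter_true_of_mem (fun v hv => by rw [hconst v hv v₀ hv₀, hbv])
      have h2 : ℓ.filter (fun v => v x = true) = ∅ :=
        Finset.filter_false_of_mem (fun v hv => by
          rw [hconst v hv v₀ hv₀, hbv]; simp)
      rw [WE, h1, h2]
      simp [WE_empty, ciInf_const]
    | true =>
      have h1 : ℓ.filter (fun v => v x = false) = ∅ :=
        Finset.filter_false_of_mem (fun v hv => by
          rw [hconst v hv v₀ hv₀, hbv]; simp)
      have h2 : ℓ.filter (fun v => v x = true) = ℓ :=
        Finset.filter_true_of_mem (fun v hv => by rw [hconst v hv v₀ hv₀, hbv])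
      rw [WE, h1, h2]
      simp [WE_empty, ciInf_const]
  refine ⟨hmain, ?_, ?_⟩
  · have h1 : WE Good 1 ℓ x = ⨅ i : Fin d, WE Good 0 ℓ i := hmain 0
    have h0 : ∀ i : Fin d, WE Good 0 ℓ i = (ℓ.card : ℝ) * entH Good ℓ := fun i => rfl
    simp only [IGk, h1, h0, ciInf_const]
    field_simp
    ring
  · intro k hk hsup
    obtain ⟨m, rfl⟩ : ∃ m, k = m + 1 := ⟨k - 1, by omega⟩
    simp only [Nat.add_sub_cancel] at hsup
    -- the sup of IGk m equals entH - (⨅ WE m)/card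
    have hbb : BddBelow (Set.range fun i : Fin d => WE Good m ℓ i) :=
      Set.Finite.bddBelow (Set.finite_range _)
    have hswap : (⨆ i : Fin d, IGk Good m ℓ i)
        = entH Good ℓ - (⨅ i : Fin d, WE Good m ℓ i) / ℓ.card := by
      apply le_antisymm
      · apply ciSup_le
        intro i
        have h := ciInf_le hbb i
        have hd : (⨅ i : Fin d, WE Good m ℓ i) / ℓ.card ≤ WE Good m ℓ i / ℓ.card := by
          gcongr
        exact sub_le_sub_left hd _
      · obtain ⟨i, hi⟩ := exists_eq_ciInf_of_finite (f := fun i : Fin d => WE Good m ℓ i)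
        have : entH Good ℓ - (⨅ i : Fin d, WE Good m ℓ i) / ℓ.card = IGk Good m ℓ i := by
          rw [IGk, ← hi]
        rw [this]
        exact le_ciSup (Set.Finite.bddAbove (Set.finite_range _)) i
    rw [hswap] at hsup
    rw [IGk, hmain m]
    exact hsup
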